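/- Let H ⊆ V be Hilbert spaces, P : H → H* bounded satisfying the Gårding inequality Re⟨Pv,v⟩ ≥ ‖v‖²_H − (1+‖E‖)‖v‖²_V, let Π₁ : H → H be a bounded projection, and let S : Π₁V → Π₁V be bounded with Re⟨(P + Π₁*ηS²Π₁)w, w⟩ ≥ C‖w‖²_H for all w ∈ Π₁H (coercivity of P^# on the range of Π₁), where η = Π₁*ιΠ₁. Suppose P^# := P + Π₁*ηS²Π₁ satisfies: E₀₀ := Π₀*EΠ₀ is coercive on Π₀H (Re⟨E₀₀v,v⟩ ≥ C_E‖v‖²_H for v ∈ Π₀H, where Π₀ = I − Π₁) and P^# has lower-triangular block structure (Π₀*P^#Π₁ = 0). Then P^# satisfies a Gårding inequality on all of H: there exist C₁, C₂ > 0 with Re⟨P^# v, v⟩ ≥ C₁‖v‖²_H − C₂‖v‖²_V for all v ∈ H. -/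

import Mathlib

/- STATEMENT 13: Gårding inequality for P^# = P + Π₁* η S² Π₁.  H ⊆ V Hilbert spaces
(embedding e); P, E : H → H* bounded, identified via the Riesz map of H with operators
P, E : H →L[ℂ] H; Pi0 (= Π₀) a bounded projection on H acting compatibly on V via Q₀,
with ‖Π₀v‖_H = ‖Π₀v‖_V; Π₁ = I − Π₀; S bounded on V; η = Π₁* ι Π₁, so that the pairing of
P^# is Bhash u v = ⟨Pu, v⟩ + (S²Π₁u, Π₁v)_V.  Hypotheses: P satisfies the Gårding
inequality with constant (1+‖E‖); E₀₀ is coercive on Π₀H; P^# is coercive on Π₁H;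
P^# is lower-triangular (Π₀* P^# Π₁ = 0).  Conclusion: P^# satisfies a Gårding inequality
on all of H: ∃ C₁, C₂ > 0, Re⟨P^# v, v⟩ ≥ C₁‖v‖²_H − C₂‖v‖²_V. -/

local notation "⟪" x ", " y "⟫" => @inner ℂ _ _ x y

/-- The sesquilinear pairing of `P^# = P + Π₁* η S² Π₁`. -/
noncomputable def Bhash {H V : Type*}
    [NormedAddCommGroup H] [InnerProductSpace ℂ H]
    [NormedAddCommGroup V] [InnerProductSpace ℂ V]
    (e : H →L[ℂ] V) (P : H →L[ℂ] H) (Q₀ S : V →L[ℂ] V) (u v : H) : ℂ :=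
  ⟪P u, v⟫ + ⟪S (S (e u - Q₀ (e u))), e v - Q₀ (e v)⟫

theorem stmt13
    {H V : Type*}
    [NormedAddCommGroup H] [InnerProductSpace ℂ H] [CompleteSpace H]
    [NormedAddCommGroup V] [InnerProductSpace ℂ V] [CompleteSpace V]
    (e : H →L[ℂ] V)
    (P E Pi0 : H →L[ℂ] H) (Q₀ S : V →L[ℂ] V)
    (hproj : Pi0.comp Pi0 = Pi0)
    (hcompat : ∀ v : H, Q₀ (e v) = e (Pi0 v))
    (hnorm : ∀ v : H, ‖e (Pi0 v)‖ = ‖Pi0 v‖)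
    (hP : ∀ v : H, ‖v‖ ^ 2 - (1 + ‖E‖) * ‖e v‖ ^ 2 ≤ (⟪P v, v⟫).re)
    (CE : ℝ) (hCE : 0 < CE)
    (hE00 : ∀ v : H, CE * ‖Pi0 v‖ ^ 2 ≤ (⟪E (Pi0 v), Pi0 v⟫).re)
    (C : ℝ) (hC : 0 < C)
    (hcoer : ∀ w : H, C * ‖w - Pi0 w‖ ^ 2 ≤ (Bhash e P Q₀ S (w - Pi0 w) (w - Pi0 w)).re)
    (htri : ∀ u v : H, Bhash e P Q₀ S (u - Pi0 u) (Pi0 v) = 0) :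
    ∃ C₁ > 0, ∃ C₂ > 0, ∀ v : H,
      C₁ * ‖v‖ ^ 2 - C₂ * ‖e v‖ ^ 2 ≤ (Bhash e P Q₀ S v v).re := by
  have hPP : ∀ w : H, Pi0 (Pi0 w) = Pi0 w := fun w => by
    have := ContinuousLinearMap.ext_iff.mp hproj w
    simpa using this
  refine ⟨C/4, by positivity, (C/2 + ‖P‖ + ‖P‖^2/C) * ‖Q₀‖^2 + 1, by positivity,
    fun v => ?_⟩
  -- abbreviations
  have h3 : Pi0 (v - Pi0 v) = 0 := by rw [map_sub, hPP, sub_self]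
  -- lower triangular structure
  have h4 : ⟪P (v - Pi0 v), Pi0 v⟫ = 0 := by
    have h := htri v v
    rw [Bhash, hcompat (Pi0 v), hPP, sub_self, inner_zero_right, add_zero] at h
    exact h
  -- decomposition of the quadratic form
  have hkey : Bhash e P Q₀ S v v =
      ⟪P (Pi0 v), Pi0 v⟫ + ⟪P (Pi0 v), v - Pi0 v⟫ +
        Bhash e P Q₀ S (v - Pi0 v) (v - Pi0 v) := by
    have hev : e v - Q₀ (e v) = e (v - Pi0 v) := by rw [hcompat, map_sub]
    have hev1 : e (v - Pi0 v) - Q₀ (e (v - Pi0 v)) = e (v - Pi0 v) := by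
      rw [hcompat, h3, map_zero, sub_zero]
    have hsplit : ⟪P v, v⟫ = ⟪P (Pi0 v), Pi0 v⟫ + ⟪P (Pi0 v), v - Pi0 v⟫ +
        ⟪P (v - Pi0 v), v - Pi0 v⟫ := by
      conv_lhs => rw [show v = Pi0 v + (v - Pi0 v) from by abel]
      simp only [map_add, inner_add_left, inner_add_right, h4]
      ring
    rw [Bhash, Bhash, hev, hev1, hsplit]
    ring
  -- bounds on the P-terms
  have hre_bound : ∀ x y : H, -(‖P‖ * (‖x‖ * ‖y‖)) ≤ (⟪P x, y⟫).re := by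
    intro x y
    have h1 : ‖⟪P x, y⟫‖ ≤ ‖P‖ * (‖x‖ * ‖y‖) := by
      calc ‖⟪P x, y⟫‖ ≤ ‖P x‖ * ‖y‖ := norm_inner_le_norm _ _
        _ ≤ ‖P‖ * ‖x‖ * ‖y‖ :=
          mul_le_mul_of_nonneg_right (P.le_opNorm x) (norm_nonneg y)
        _ = ‖P‖ * (‖x‖ * ‖y‖) := by ring
    have h2 : |(⟪P x, y⟫).re| ≤ ‖(⟪P x, y⟫ : ℂ)‖ := by
      exact Complex.abs_re_le_norm _
    linarith [(abs_le.mp h2).1, h1]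
  have f3 := hre_bound (Pi0 v) (Pi0 v)
  have f4 := hre_bound (Pi0 v) (v - Pi0 v)
  have f2 := hcoer v
  -- control of ‖Π₀v‖ by ‖e v‖
  have h5 : ‖Pi0 v‖ ≤ ‖Q₀‖ * ‖e v‖ := by
    rw [← hnorm v, ← hcompat v]; exact Q₀.le_opNorm _
  have h5sq : ‖Pi0 v‖^2 ≤ ‖Q₀‖^2 * ‖e v‖^2 := by
    rw [← mul_pow]
    exact pow_le_pow_left₀ (norm_nonneg _) h5 2
  -- triangle inequality
  have h6 : ‖v‖ ≤ ‖Pi0 v‖ + ‖v - Pi0 v‖ := by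
    calc ‖v‖ = ‖Pi0 v + (v - Pi0 v)‖ := by rw [show Pi0 v + (v - Pi0 v) = v from by abel]
      _ ≤ ‖Pi0 v‖ + ‖v - Pi0 v‖ := norm_add_le _ _
  have h6sq : ‖v‖^2 ≤ 2*‖Pi0 v‖^2 + 2*‖v - Pi0 v‖^2 := by
    have h7 : ‖v‖^2 ≤ (‖Pi0 v‖ + ‖v - Pi0 v‖)^2 := pow_le_pow_left₀ (norm_nonneg _) h6 2
    nlinarith [sq_nonneg (‖Pi0 v‖ - ‖v - Pi0 v‖)]
  -- Young's inequality
  have hyoung : ‖P‖ * (‖Pi0 v‖ * ‖v - Pi0 v‖) ≤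
      ‖P‖^2/C * ‖Pi0 v‖^2 + C/4 * ‖v - Pi0 v‖^2 := by
    rw [← sub_nonneg]
    have heq : ‖P‖^2/C * ‖Pi0 v‖^2 + C/4 * ‖v - Pi0 v‖^2 - ‖P‖ * (‖Pi0 v‖ * ‖v - Pi0 v‖)
        = (‖P‖ * ‖Pi0 v‖ - C/2 * ‖v - Pi0 v‖)^2 / C := by
      field_simp
      ring
    rw [heq]
    positivity
  -- scaled versions (to keep everything linear for linarith)
  have habs : (C/2 + ‖P‖ + ‖P‖^2/C) * ‖Pi0 v‖^2 ≤
      (C/2 + ‖P‖ + ‖P‖^2/C) * (‖Q₀‖^2 * ‖e v‖^2) :=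
    mul_le_mul_of_nonneg_left h5sq (by positivity)
  have habs2 : C/4 * ‖v‖^2 ≤ C/4 * (2*‖Pi0 v‖^2 + 2*‖v - Pi0 v‖^2) :=
    mul_le_mul_of_nonneg_left h6sq (by positivity)
  have f9 : (0:ℝ) ≤ C * ‖v - Pi0 v‖^2 := by positivity
  have f8 : (0:ℝ) ≤ ‖e v‖^2 := by positivity
  have hkeyre : (Bhash e P Q₀ S v v).re =
      (⟪P (Pi0 v), Pi0 v⟫).re + (⟪P (Pi0 v), v - Pi0 v⟫).re +
        (Bhash e P Q₀ S (v - Pi0 v) (v - Pi0 v)).re := by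
    rw [hkey]; simp [Complex.add_re]
  rw [hkeyre]
  nlinarith [habs, habs2, f2, f3, f4, hyoung, f9, f8]
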